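/- arXiv:2504.11525 — 2 statements merged into one kernel-verified Lean document; each statement's English description precedes it below -/
import Mathlib

section
/- Let n ≥ 2. The subspace of EuclideanSpace ℂ (Fin n → Fin 2) spanned by the Dicke states D_n^k for 1 ≤ k ≤ n − 1 has finrank n − 1, and every nonzero vector in this span is genuinely multipartite entangled; i.e., this span is a GES of dimension n − 1. -/
/-- The unnormalized `n`-qubit Dicke state with `k` excitations. -/
noncomputable def dicke (n k : ℕ) : EuclideanSpace ℂ (Fin n → Fin 2) :=
  WithLp.toLp 2 (fun (i : Fin n → Fin 2) => if (∑ j, ((i j : ℕ))) = k then (1 : ℂ) else 0)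

/-- `ψ` is biseparable across the bipartition `(S, Sᶜ)` of the `n` qubits. -/
def Biseparable {n : ℕ} (S : Set (Fin n))
    (ψ : EuclideanSpace ℂ (Fin n → Fin 2)) : Prop :=
  ∃ (φ : ((j : S) → Fin 2) → ℂ) (χ : ((j : ↥Sᶜ) → Fin 2) → ℂ),
    ∀ i, ψ i = φ (fun j => i j.val) * χ (fun j => i j.val)

/-- A nonzero vector is genuinely multipartite entangled if it is not biseparable
across any nontrivial bipartition. -/
def GME {n : ℕ} (ψ : EuclideanSpace ℂ (Fin n → Fin 2)) : Prop :=
  ψ ≠ 0 ∧ ∀ S : Set (Fin n), S ≠ ∅ → S ≠ Set.univ → ¬ Biseparable S ψ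


section DickeAux

private lemma dickeAux_sum_ite_lt (n k : ℕ) (hk : k ≤ n) :
    (∑ j : Fin n, if (j:ℕ) < k then 1 else 0) = k := by
  rw [Fin.sum_univ_eq_sum_range (fun j => if j < k then 1 else 0) n, Finset.sum_boole]
  have : (Finset.range n).filter (fun j => j < k) = Finset.range k := by
    ext j; simp; omega
  rw [this]; simp

private lemma dickeAux_weight_eIdx (n k : ℕ) (hk : k ≤ n) :
    (∑ j : Fin n, (((if (j:ℕ) < k then (1:Fin 2) else 0) : Fin 2) : ℕ)) = k := by
  have h : ∀ j : Fin n, (((if (j:ℕ) < k then (1:Fin 2) else 0) : Fin 2) : ℕ)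
      = if (j:ℕ) < k then 1 else 0 := by
    intro j; split <;> rfl
  simp_rw [h]; exact dickeAux_sum_ite_lt n k hk

private lemma dickeAux_weight_indicator {n : ℕ} (U : Finset (Fin n)) :
    (∑ j : Fin n, (((if j ∈ U then (1:Fin 2) else 0) : Fin 2) : ℕ)) = U.card := by
  have h : ∀ j : Fin n, (((if j ∈ U then (1:Fin 2) else 0) : Fin 2) : ℕ)
      = if j ∈ U then 1 else 0 := by
    intro j; split <;> rfl
  simp_rw [h, Finset.sum_ite_mem, Finset.univ_inter]
  simp

end DickeAux

/-- Lemma 1: the span of the Dicke states `D_n^k` for `1 ≤ k ≤ n − 1` is a GES of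
dimension `n − 1`. -/
theorem dicke_span_GES (n : ℕ) (hn : 2 ≤ n) :
    Module.finrank ℂ
        ↥(Submodule.span ℂ {ψ | ∃ k, 1 ≤ k ∧ k ≤ n - 1 ∧ ψ = dicke n k}) = n - 1 ∧
    ∀ ψ ∈ Submodule.span ℂ {ψ | ∃ k, 1 ≤ k ∧ k ≤ n - 1 ∧ ψ = dicke n k},
      ψ ≠ 0 → GME ψ := by
  classical
  have hspan_prop : ∀ ψ ∈ Submodule.span ℂ {ψ | ∃ k, 1 ≤ k ∧ k ≤ n - 1 ∧ ψ = dicke n k},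
      (∀ i i' : Fin n → Fin 2, (∑ j, ((i j : ℕ))) = (∑ j, ((i' j : ℕ))) → ψ i = ψ i') ∧
      (∀ i : Fin n → Fin 2, (∑ j, ((i j : ℕ))) = 0 ∨ (∑ j, ((i j : ℕ))) = n → ψ i = 0) := by
    intro ψ hψ
    induction hψ using Submodule.span_induction with
    | mem x hx =>
      obtain ⟨k, hk1, hk2, rfl⟩ := hx
      constructor
      · intro i i' h; simp only [dicke, PiLp.toLp_apply, h]
      · rintro i (h | h) <;> simp only [dicke, PiLp.toLp_apply, h] <;> rw [if_neg (by omega)]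
    | zero => constructor <;> intros <;> rfl
    | add x y hx hy ihx ihy =>
      constructor
      · intro i i' h
        show x i + y i = x i' + y i'
        rw [ihx.1 i i' h, ihy.1 i i' h]
      · intro i h
        show x i + y i = 0
        rw [ihx.2 i h, ihy.2 i h, add_zero]
    | smul c x hx ihx =>
      constructor
      · intro i i' h
        show c * x i = c * x i'
        rw [ihx.1 i i' h]
      · intro i h
        show c * x i = 0
        rw [ihx.2 i h, mul_zero]
  constructor
  · -- the dimension computation
    set v : Fin (n-1) → EuclideanSpace ℂ (Fin n → Fin 2) := fun j => dicke n ((j:ℕ)+1) with hv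
    have hset : {ψ | ∃ k, 1 ≤ k ∧ k ≤ n - 1 ∧ ψ = dicke n k} = Set.range v := by
      ext ψ; constructor
      · rintro ⟨k, hk1, hk2, rfl⟩
        refine ⟨⟨k-1, by omega⟩, ?_⟩
        show dicke n ((k-1)+1) = dicke n k
        have hkk : k - 1 + 1 = k := by omega
        rw [hkk]
      · rintro ⟨j, rfl⟩
        have := j.isLt
        exact ⟨(j:ℕ)+1, by omega, by omega, rfl⟩
    have hli : LinearIndependent ℂ v := by
      rw [Fintype.linearIndependent_iff]
      intro g hg i
      have him := i.isLt
      have h : (∑ j, g j • v j) (fun j => if (j:ℕ) < (i:ℕ)+1 then 1 else 0) = 0 := by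
        rw [hg]; rfl
      rw [WithLp.ofLp_sum, Finset.sum_apply] at h
      simp only [PiLp.smul_apply, smul_eq_mul, hv, dicke, PiLp.toLp_apply] at h
      rw [Finset.sum_eq_single i] at h
      · rw [dickeAux_weight_eIdx n ((i:ℕ)+1) (by omega)] at h
        simp at h
        exact h
      · intro j _ hji
        have := j.isLt
        rw [dickeAux_weight_eIdx n ((i:ℕ)+1) (by omega)]
        have hne : ¬ ((i:ℕ)+1 = (j:ℕ)+1) := by
          intro hc; exact hji (Fin.ext (by omega))
        simp [hne, show ¬ ((i:ℕ) = (j:ℕ)) by omega]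
      · intro hcon; exact absurd (Finset.mem_univ i) hcon
    rw [hset, finrank_span_eq_card hli]
    simp
  · -- every nonzero vector in the span is GME
    intro ψ hψ hψ0
    obtain ⟨hP1, hP2⟩ := hspan_prop ψ hψ
    refine ⟨hψ0, ?_⟩
    intro S hS0 hSu
    rintro ⟨φ, χ, hbi⟩
    have hex : ∃ w, ∃ i : Fin n → Fin 2, (∑ j, ((i j : ℕ))) = w ∧ ψ i ≠ 0 := by
      by_contra hc
      push_neg at hc
      apply hψ0
      ext i
      exact hc _ i rfl
    set k := Nat.find hex with hk
    obtain ⟨i₀, hi₀w, hi₀⟩ := Nat.find_spec hex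
    rw [← hk] at hi₀w
    have hwle : ∀ i : Fin n → Fin 2, (∑ j, ((i j : ℕ))) ≤ n := by
      intro i
      calc (∑ j, ((i j : ℕ))) ≤ ∑ _j : Fin n, 1 :=
        Finset.sum_le_sum (fun j _ => by omega)
      _ = n := by simp
    have hk1 : 1 ≤ k := by
      rcases Nat.eq_zero_or_pos k with h | h
      · exact absurd (hP2 i₀ (Or.inl (by rw [hi₀w, h]))) hi₀
      · exact h
    have hkn : k ≤ n - 1 := by
      have h1 := hwle i₀
      have : (∑ j, ((i₀ j : ℕ))) ≠ n := fun hc => hi₀ (hP2 i₀ (Or.inr hc))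
      omega
    set m := S.toFinset.card with hm
    have hm1 : 1 ≤ m := by
      have : S.toFinset.Nonempty := by
        rw [Set.toFinset_nonempty]
        exact Set.nonempty_iff_ne_empty.mpr hS0
      exact Finset.card_pos.mpr this
    have hm2 : m ≤ n - 1 := by
      have hle : S.toFinset.card ≤ n := by
        have h0 : S.toFinset.card ≤ Fintype.card (Fin n) := Finset.card_le_univ _
        rwa [Fintype.card_fin] at h0
      have hne : m ≠ n := by
        intro hc
        apply hSu
        have huniv : S.toFinset = Finset.univ :=
          Finset.eq_univ_of_card _ (by rw [← hm, hc]; exact (Fintype.card_fin n).symm)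
        rw [← Set.toFinset_inj, huniv]
        simp
      omega
    have hcompl : Sᶜ.toFinset.card = n - m := by
      rw [Set.toFinset_compl, Finset.card_compl, hm]
      simp
    set a := min (k-1) (m-1) with ha
    set b := k - 1 - a with hb
    have hab : a + b = k - 1 := by omega
    have ha1 : a + 1 ≤ m := by omega
    have hb1 : b + 1 ≤ n - m := by omega
    obtain ⟨A', hA'sub, hA'card⟩ := Finset.exists_subset_card_eq (s := S.toFinset) (n := a+1) (by omega)
    obtain ⟨B', hB'sub, hB'card⟩ := Finset.exists_subset_card_eq (s := Sᶜ.toFinset) (n := b+1) (by omega)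
    obtain ⟨s, hs⟩ := Finset.card_pos.mp (by omega : 0 < A'.card)
    obtain ⟨t, ht⟩ := Finset.card_pos.mp (by omega : 0 < B'.card)
    set A := A'.erase s with hA
    set B := B'.erase t with hB2
    have hAcard : A.card = a := by rw [hA, Finset.card_erase_of_mem hs, hA'card]; omega
    have hBcard : B.card = b := by rw [hB2, Finset.card_erase_of_mem ht, hB'card]; omega
    have hAsub : A ⊆ S.toFinset := (Finset.erase_subset _ _).trans hA'sub
    have hBsub : B ⊆ Sᶜ.toFinset := (Finset.erase_subset _ _).trans hB'sub
    set ivec : Finset (Fin n) → (Fin n → Fin 2) := fun U j => if j ∈ U then 1 else 0 with hivec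
    have hweight : ∀ U : Finset (Fin n), (∑ j, ((ivec U j : ℕ))) = U.card := by
      intro U; exact dickeAux_weight_indicator U
    have hres : ∀ (A₀ B₀ : Finset (Fin n)), A₀ ⊆ S.toFinset → B₀ ⊆ Sᶜ.toFinset →
        ψ (ivec (A₀ ∪ B₀)) = φ (fun j : S => if j.val ∈ A₀ then 1 else 0) *
          χ (fun j : ↥Sᶜ => if j.val ∈ B₀ then 1 else 0) := by
      intro A₀ B₀ hA₀ hB₀
      rw [hbi]
      congr 1
      · congr 1
        funext j
        have hj : j.val ∈ A₀ ∪ B₀ ↔ j.val ∈ A₀ := by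
          rw [Finset.mem_union]
          constructor
          · rintro (h | h)
            · exact h
            · exact absurd (Set.mem_toFinset.mp (hB₀ h)) (by simp [j.2])
          · exact Or.inl
        simp only [hivec, hj]
      · congr 1
        funext j
        have hj : j.val ∈ A₀ ∪ B₀ ↔ j.val ∈ B₀ := by
          rw [Finset.mem_union]
          constructor
          · rintro (h | h)
            · exact absurd (Set.mem_toFinset.mp (hA₀ h)) j.2
            · exact h
          · exact Or.inr
        simp only [hivec, hj]
    have key : ψ (ivec (A ∪ B)) * ψ (ivec (A' ∪ B'))
        = ψ (ivec (A' ∪ B)) * ψ (ivec (A ∪ B')) := by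
      rw [hres A B hAsub hBsub, hres A' B' hA'sub hB'sub, hres A' B hA'sub hBsub,
        hres A B' hAsub hB'sub]
      ring
    have hdisj : ∀ (A₀ B₀ : Finset (Fin n)), A₀ ⊆ S.toFinset → B₀ ⊆ Sᶜ.toFinset →
        (A₀ ∪ B₀).card = A₀.card + B₀.card := by
      intro A₀ B₀ hA₀ hB₀
      apply Finset.card_union_of_disjoint
      apply Finset.disjoint_left.mpr
      intro x hx1 hx2
      have h1 := Set.mem_toFinset.mp (hA₀ hx1)
      have h2 := Set.mem_toFinset.mp (hB₀ hx2)
      exact h2 h1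
    have hzero : ψ (ivec (A ∪ B)) = 0 := by
      by_contra hne
      have : k ≤ k - 1 := Nat.find_le ⟨ivec (A ∪ B),
        by rw [hweight, hdisj A B hAsub hBsub, hAcard, hBcard, hab], hne⟩
      omega
    have hknz : ∀ U : Finset (Fin n), U.card = k → ψ (ivec U) ≠ 0 := by
      intro U hU
      have := hP1 (ivec U) i₀ (by rw [hweight, hU, hi₀w])
      rw [this]; exact hi₀
    have h1 : ψ (ivec (A' ∪ B)) ≠ 0 := by
      apply hknz
      rw [hdisj A' B hA'sub hBsub, hA'card, hBcard]
      omega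
    have h2 : ψ (ivec (A ∪ B')) ≠ 0 := by
      apply hknz
      rw [hdisj A B' hAsub hB'sub, hAcard, hB'card]
      omega
    rw [hzero, zero_mul] at key
    exact mul_ne_zero h1 h2 key.symm
end

section
/- Let n ≥ 2 and let W be the span in EuclideanSpace ℂ (Fin n → Fin 2) of all Dicke states {D_n^k : 0 ≤ k ≤ n}. Then the n-qubit space decomposes as the orthogonal direct sum of: (i) the span of the two coordinate basis vectors e_{(0,…,0)} and e_{(1,…,1)}; (ii) the span of {D_n^k : 1 ≤ k ≤ n−1}, which has finrank n − 1 and all of whose nonzero vectors are GME; and (iii) the orthogonal complement Wᗮ, which has finrank 2^n − n − 1 and contains no nonzero fully product vector. -/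
/-- A vector of the `n`-qubit space is *fully product* if it is a simple tensor. -/
def FullyProduct {n : ℕ} (ψ : EuclideanSpace ℂ (Fin n → Fin 2)) : Prop :=
  ∃ φ : Fin n → Fin 2 → ℂ, ∀ i, ψ i = ∏ j, φ j (i j)

/-- weight of a configuration -/
def wt {n : ℕ} (i : Fin n → Fin 2) : ℕ := ∑ j, ((i j : ℕ))

lemma dicke_apply (n k : ℕ) (i : Fin n → Fin 2) :
    dicke n k i = if wt i = k then 1 else 0 := rfl

lemma wt_le {n : ℕ} (i : Fin n → Fin 2) : wt i ≤ n := by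
  calc wt i ≤ ∑ _j : Fin n, 1 := Finset.sum_le_sum (fun j _ => by omega)
  _ = n := by simp

lemma wt_eq_zero_iff {n : ℕ} (i : Fin n → Fin 2) :
    wt i = 0 ↔ i = fun _ => 0 := by
  constructor
  · intro h
    funext j
    have := Finset.sum_eq_zero_iff.mp h j (Finset.mem_univ j)
    omega
  · intro h; subst h; simp [wt]

lemma wt_eq_n_iff {n : ℕ} (i : Fin n → Fin 2) :
    wt i = n ↔ i = fun _ => 1 := by
  constructor
  · intro h
    funext j
    have h2 : ∀ j ∈ Finset.univ, ((i j : ℕ)) = 1 := by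
      rw [← Finset.sum_eq_sum_iff_of_le (fun j _ => by omega)]
      · simp [← h, wt]
    have := h2 j (Finset.mem_univ j)
    omega
  · intro h; subst h; simp [wt]

lemma wt_indicator {n : ℕ} (T : Finset (Fin n)) :
    wt (fun j => if j ∈ T then (1 : Fin 2) else 0) = T.card := by
  unfold wt
  have : ∀ j : Fin n, ((if j ∈ T then (1:Fin 2) else 0 : Fin 2) : ℕ) = if j ∈ T then 1 else 0 := by
    intro j; split <;> rfl
  simp only [this, Finset.sum_ite_mem, Finset.univ_inter, Finset.sum_const, smul_eq_mul, mul_one]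

lemma exists_wt {n m : ℕ} (h : m ≤ n) : ∃ i : Fin n → Fin 2, wt i = m := by
  obtain ⟨T, -, hT⟩ := Finset.exists_subset_card_eq (show m ≤ (Finset.univ : Finset (Fin n)).card by simpa)
  exact ⟨_, by rw [wt_indicator, hT]⟩

lemma dicke_ne_zero {n k : ℕ} (h : k ≤ n) : dicke n k ≠ 0 := by
  obtain ⟨i, hi⟩ := exists_wt h
  intro h0
  have : dicke n k i = 0 := by rw [h0]; simp
  rw [dicke_apply, hi, if_pos rfl] at this
  exact one_ne_zero this

lemma inner_dicke_dicke {n k l : ℕ} (h : k ≠ l) :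
    (inner ℂ (dicke n k) (dicke n l) : ℂ) = 0 := by
  rw [PiLp.inner_apply]
  refine Finset.sum_eq_zero fun i _ => ?_
  simp only [dicke_apply, RCLike.inner_apply]
  by_cases hk : wt i = k
  · rw [if_neg (by omega : ¬ wt i = l)]; simp
  · rw [if_neg hk]; simp

lemma dicke_zero_eq (n : ℕ) :
    dicke n 0 = EuclideanSpace.single (fun _ => (0 : Fin 2)) (1 : ℂ) := by
  ext i
  rw [dicke_apply, EuclideanSpace.single_apply]
  by_cases h : wt i = 0
  · rw [if_pos h, if_pos ((wt_eq_zero_iff i).mp h)]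
  · rw [if_neg h, if_neg (fun hc => h ((wt_eq_zero_iff i).mpr hc))]

lemma dicke_n_eq (n : ℕ) :
    dicke n n = EuclideanSpace.single (fun _ => (1 : Fin 2)) (1 : ℂ) := by
  ext i
  rw [dicke_apply, EuclideanSpace.single_apply]
  by_cases h : wt i = n
  · rw [if_pos h, if_pos ((wt_eq_n_iff i).mp h)]
  · rw [if_neg h, if_neg (fun hc => h ((wt_eq_n_iff i).mpr hc))]

lemma li_dicke_all (n : ℕ) :
    LinearIndependent ℂ (fun k : Fin (n + 1) => dicke n (k : ℕ)) := by
  refine linearIndependent_of_ne_zero_of_inner_eq_zero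
    (fun k => dicke_ne_zero (by omega)) (fun k l hkl => ?_)
  exact inner_dicke_dicke (fun h => hkl (Fin.ext h))

lemma li_dicke_mid (n : ℕ) :
    LinearIndependent ℂ (fun k : Fin (n - 1) => dicke n ((k : ℕ) + 1)) := by
  refine linearIndependent_of_ne_zero_of_inner_eq_zero
    (fun k => dicke_ne_zero (by have := k.isLt; omega)) (fun k l hkl => ?_)
  refine inner_dicke_dicke (fun h => hkl (Fin.ext (by omega)))

lemma range_dicke_all (n : ℕ) :
    Set.range (fun k : Fin (n + 1) => dicke n (k : ℕ)) = {v | ∃ k ≤ n, v = dicke n k} := by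
  ext v
  constructor
  · rintro ⟨k, rfl⟩; exact ⟨k, by omega, rfl⟩
  · rintro ⟨k, hk, rfl⟩; exact ⟨⟨k, by omega⟩, rfl⟩

lemma range_dicke_mid (n : ℕ) (hn : 2 ≤ n) :
    Set.range (fun k : Fin (n - 1) => dicke n ((k : ℕ) + 1)) =
      {v | ∃ k, 1 ≤ k ∧ k ≤ n - 1 ∧ v = dicke n k} := by
  ext v
  constructor
  · rintro ⟨k, rfl⟩
    exact ⟨(k : ℕ) + 1, by omega, by have := k.isLt; omega, rfl⟩
  · rintro ⟨k, hk1, hk2, rfl⟩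
    refine ⟨⟨k - 1, by omega⟩, ?_⟩
    show dicke n (k - 1 + 1) = dicke n k
    rw [Nat.sub_add_cancel hk1]




lemma wt_update_one {n : ℕ} (i : Fin n → Fin 2) (j0 : Fin n) (h : i j0 = 0) :
    wt (Function.update i j0 1) = wt i + 1 := by
  unfold wt
  have h1 : ∑ j, ((Function.update i j0 1 j : ℕ)) =
      ((1 : Fin 2) : ℕ) + ∑ j ∈ Finset.univ \ {j0}, ((i j : ℕ)) := by
    rw [← Finset.sum_update_of_mem (Finset.mem_univ j0)]
    refine Finset.sum_congr rfl fun j _ => ?_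
    rcases eq_or_ne j j0 with rfl | hj
    · simp
    · simp [Function.update_of_ne hj]
  have h2 : ∑ j, ((i j : ℕ)) =
      ∑ j ∈ Finset.univ \ {j0}, ((i j : ℕ)) + ((i j0 : ℕ)) := by
    rw [Finset.sdiff_singleton_eq_erase, Finset.sum_erase_add _ _ (Finset.mem_univ j0)]
  rw [h1, h2, h]
  simp only [Fin.val_zero, Fin.val_one, add_zero]
  omega

lemma span_mid_structure {n : ℕ} {ψ : EuclideanSpace ℂ (Fin n → Fin 2)}
    (hn : 2 ≤ n)
    (hψ : ψ ∈ Submodule.span ℂ {v | ∃ k, 1 ≤ k ∧ k ≤ n - 1 ∧ v = dicke n k}) :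
    (∀ i i', wt i = wt i' → ψ i = ψ i') ∧
      ψ (fun _ => 0) = 0 ∧ ψ (fun _ => 1) = 0 := by
  let M : Submodule ℂ (EuclideanSpace ℂ (Fin n → Fin 2)) :=
  { carrier := {ψ | (∀ i i', wt i = wt i' → ψ i = ψ i') ∧
      ψ (fun _ => 0) = 0 ∧ ψ (fun _ => 1) = 0}
    add_mem' := by
      rintro a b ⟨ha1, ha2, ha3⟩ ⟨hb1, hb2, hb3⟩
      refine ⟨fun i i' h => ?_, ?_, ?_⟩ <;>
        simp only [PiLp.add_apply, ha2, ha3, hb2, hb3, add_zero]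
      rw [ha1 i i' h, hb1 i i' h]
    zero_mem' := ⟨fun _ _ _ => rfl, rfl, rfl⟩
    smul_mem' := by
      rintro c a ⟨ha1, ha2, ha3⟩
      refine ⟨fun i i' h => ?_, ?_, ?_⟩ <;>
        simp only [PiLp.smul_apply, ha2, ha3, smul_zero]
      rw [ha1 i i' h] }
  have hle : Submodule.span ℂ {v | ∃ k, 1 ≤ k ∧ k ≤ n - 1 ∧ v = dicke n k} ≤ M := by
    rw [Submodule.span_le]
    rintro v ⟨k, hk1, hk2, rfl⟩
    refine ⟨fun i i' h => by rw [dicke_apply, dicke_apply, h], ?_, ?_⟩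
    · rw [dicke_apply, if_neg]
      have : wt (fun _ : Fin n => (0 : Fin 2)) = 0 := by simp [wt]
      omega
    · rw [dicke_apply, if_neg]
      have : wt (fun _ : Fin n => (1 : Fin 2)) = n := by simp [wt]
      omega
  exact hle hψ

lemma mid_gme {n : ℕ} (hn : 2 ≤ n) (ψ : EuclideanSpace ℂ (Fin n → Fin 2))
    (h1 : ∀ i i', wt i = wt i' → ψ i = ψ i')
    (h2 : ψ (fun _ => 0) = 0) (h3 : ψ (fun _ => 1) = 0)
    {S : Set (Fin n)} (hS : S ≠ ∅) (hS' : S ≠ Set.univ)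
    (hb : Biseparable S ψ) : ψ = 0 := by
  obtain ⟨j0, hj0⟩ := Set.nonempty_iff_ne_empty.mpr hS
  obtain ⟨j1, hj1⟩ := Set.ne_univ_iff_exists_notMem S |>.mp hS'
  have hne : j0 ≠ j1 := fun h => hj1 (h ▸ hj0)
  obtain ⟨φ, χ, hfac⟩ := hb
  have key : ∀ m, ∀ i : Fin n → Fin 2, wt i = m → ψ i = 0 := by
    intro m
    induction m with
    | zero => intro i hi; rw [(wt_eq_zero_iff i).mp hi]; exact h2
    | succ m ih =>
      intro i hi
      by_cases hmn : m + 1 = n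
      · rw [(wt_eq_n_iff i).mp (hi.trans hmn)]; exact h3
      · have hle : m + 1 < n := lt_of_le_of_ne (hi ▸ wt_le i) hmn
        -- construct a configuration of weight m avoiding j0, j1
        have hcard : m ≤ ((Finset.univ : Finset (Fin n)) \ {j0, j1}).card := by
          rw [Finset.card_sdiff_of_subset (Finset.subset_univ _), Finset.card_pair hne]
          simp only [Finset.card_univ, Fintype.card_fin]
          omega
        obtain ⟨T, hT, hTcard⟩ := Finset.exists_subset_card_eq hcard
        set a : Fin n → Fin 2 := fun j => if j ∈ T then 1 else 0 with ha
        have hj0T : j0 ∉ T := fun hc => by have := hT hc; simp at this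
        have hj1T : j1 ∉ T := fun hc => by have := hT hc; simp at this
        have haj0 : a j0 = 0 := by simp [ha, hj0T]
        have haj1 : a j1 = 0 := by simp [ha, hj1T]
        have hwa : wt a = m := by rw [ha, wt_indicator, hTcard]
        set b := Function.update a j0 1 with hbdef
        set c := Function.update a j1 1 with hcdef
        set d := Function.update b j1 1 with hddef
        have hwb : wt b = m + 1 := by rw [hbdef, wt_update_one a j0 haj0, hwa]
        have hwc : wt c = m + 1 := by rw [hcdef, wt_update_one a j1 haj1, hwa]
        -- restrictions
        have hSb : (fun j : S => b j.val) = (fun j : S => d j.val) := by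
          funext j
          rw [hddef, Function.update_of_ne (fun h => hj1 (by rw [← h]; exact j.2))]
        have hSa : (fun j : S => a j.val) = (fun j : S => c j.val) := by
          funext j
          rw [hcdef, Function.update_of_ne (fun h => hj1 (by rw [← h]; exact j.2))]
        have hCa : (fun j : ↥Sᶜ => a j.val) = (fun j : ↥Sᶜ => b j.val) := by
          funext j
          rw [hbdef, Function.update_of_ne (fun h => j.2 (by rw [h]; exact hj0))]
        have hCc : (fun j : ↥Sᶜ => c j.val) = (fun j : ↥Sᶜ => d j.val) := by
          funext j
          by_cases hj : j.val = j1
          · rw [hcdef, hddef, hj, Function.update_self, Function.update_self]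
          · rw [hcdef, hddef, Function.update_of_ne hj, Function.update_of_ne hj,
              hbdef, Function.update_of_ne (fun h => j.2 (by rw [h]; exact hj0))]
        have hmul : ψ b * ψ c = ψ a * ψ d := by
          rw [hfac a, hfac b, hfac c, hfac d, hSb, hSa, ← hCa, hCc]
          ring
        have hpa : ψ a = 0 := ih a hwa
        have hbc : ψ c = ψ b := h1 c b (hwc.trans hwb.symm)
        have hzero : ψ b = 0 := by
          have := hmul
          rw [hpa, zero_mul, hbc, mul_self_eq_zero] at this
          exact this
        rw [h1 i b (hi.trans hwb.symm)]
        exact hzero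
  ext i
  exact key (wt i) i rfl

open Polynomial in
lemma fully_product_zero {n : ℕ} (ψ : EuclideanSpace ℂ (Fin n → Fin 2))
    (horth : ∀ k, k ≤ n → ∑ i : Fin n → Fin 2, (if wt i = k then ψ i else 0) = 0)
    (φ : Fin n → Fin 2 → ℂ) (hφ : ∀ i, ψ i = ∏ j, φ j (i j)) : ψ = 0 := by
  set P : Polynomial ℂ := ∏ j, (C (φ j 0) + C (φ j 1) * X) with hPdef
  have hfac : ∀ j : Fin n, (C (φ j 0) + C (φ j 1) * X)
      = ∑ x : Fin 2, C (φ j x) * X ^ (x : ℕ) := by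
    intro j; rw [Fin.sum_univ_two]; simp
  have hP : P = ∑ i : Fin n → Fin 2, C (ψ i) * X ^ (wt i) := by
    rw [hPdef]
    simp_rw [hfac]
    rw [Finset.prod_univ_sum]
    rw [Fintype.piFinset_univ]
    refine Finset.sum_congr rfl fun i _ => ?_
    rw [Finset.prod_mul_distrib, ← map_prod, ← hφ i, Finset.prod_pow_eq_pow_sum]
    rfl
  have hP0 : P = 0 := by
    refine Polynomial.ext fun k => ?_
    rw [hP, Polynomial.finset_sum_coeff, Polynomial.coeff_zero]
    have hterm : ∀ i : Fin n → Fin 2,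
        (C (ψ i) * X ^ (wt i)).coeff k = if wt i = k then ψ i else 0 := by
      intro i
      rw [Polynomial.coeff_C_mul, Polynomial.coeff_X_pow]
      rcases eq_or_ne (wt i) k with h | h
      · simp [h]
      · simp [h, Ne.symm h]
    simp_rw [hterm]
    by_cases hk : k ≤ n
    · exact horth k hk
    · refine Finset.sum_eq_zero fun i _ => ?_
      rw [if_neg]
      have := wt_le i
      omega
  obtain ⟨j, -, hj⟩ := Finset.prod_eq_zero_iff.mp (hPdef ▸ hP0)
  have hj0 : φ j 0 = 0 := by
    have := congrArg (fun p => Polynomial.coeff p 0) hj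
    simpa using this
  have hj1 : φ j 1 = 0 := by
    have := congrArg (fun p => Polynomial.coeff p 1) hj
    simpa using this
  ext i
  rw [hφ i, PiLp.zero_apply]
  refine Finset.prod_eq_zero (Finset.mem_univ j) ?_
  rcases eq_or_ne (i j) 0 with h | h
  · rw [h, hj0]
  · have hij : i j = 1 := by omega
    rw [hij, hj1]

lemma inner_dicke_left {n k : ℕ} (ψ : EuclideanSpace ℂ (Fin n → Fin 2)) :
    (inner ℂ (dicke n k) ψ : ℂ) = ∑ i : Fin n → Fin 2, (if wt i = k then ψ i else 0) := by
  rw [PiLp.inner_apply]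
  refine Finset.sum_congr rfl fun i _ => ?_
  rw [RCLike.inner_apply, dicke_apply]
  by_cases h : wt i = k <;> simp [h]

/-- Theorem 3: the `n`-qubit Hilbert space decomposes as the orthogonal direct sum
`span{|0…0⟩, |1…1⟩} ⊕ GES_{n−1} ⊕ CES_{2^n − n − 1}`. -/
theorem nqubit_decomposition (n : ℕ) (hn : 2 ≤ n)
    (W : Submodule ℂ (EuclideanSpace ℂ (Fin n → Fin 2)))
    (hW : W = Submodule.span ℂ {v | ∃ k ≤ n, v = dicke n k})
    (A : Submodule ℂ (EuclideanSpace ℂ (Fin n → Fin 2)))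
    (hA : A = Submodule.span ℂ
        {EuclideanSpace.single (fun _ => (0 : Fin 2)) (1 : ℂ),
         EuclideanSpace.single (fun _ => (1 : Fin 2)) (1 : ℂ)})
    (B : Submodule ℂ (EuclideanSpace ℂ (Fin n → Fin 2)))
    (hB : B = Submodule.span ℂ {v | ∃ k, 1 ≤ k ∧ k ≤ n - 1 ∧ v = dicke n k}) :
    Submodule.IsOrtho A B ∧ Submodule.IsOrtho A Wᗮ ∧ Submodule.IsOrtho B Wᗮ ∧
    A ⊔ B ⊔ Wᗮ = ⊤ ∧
    Module.finrank ℂ ↥B = n - 1 ∧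
    (∀ ψ ∈ B, ψ ≠ 0 → GME ψ) ∧
    Module.finrank ℂ ↥(Wᗮ) = 2 ^ n - n - 1 ∧
    (∀ ψ ∈ Wᗮ, FullyProduct ψ → ψ = 0) := by
  have hA' : A = Submodule.span ℂ {dicke n 0, dicke n n} := by
    rw [hA, dicke_zero_eq, dicke_n_eq]
  have hAW : A ≤ W := by
    rw [hA', hW, Submodule.span_le]
    rintro v (rfl | rfl) <;> exact Submodule.subset_span ⟨_, by omega, rfl⟩
  have hBW : B ≤ W := by
    rw [hB, hW, Submodule.span_le]
    rintro v ⟨k, hk1, hk2, rfl⟩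
    exact Submodule.subset_span ⟨k, by omega, rfl⟩
  refine ⟨?_, ?_, ?_, ?_, ?_, ?_, ?_, ?_⟩
  · -- A ⟂ B
    rw [hA', hB, Submodule.isOrtho_span]
    rintro u (rfl | rfl) v ⟨k, hk1, hk2, rfl⟩ <;>
      exact inner_dicke_dicke (by omega)
  · exact Submodule.IsOrtho.mono_left hAW (Submodule.isOrtho_orthogonal_right W)
  · exact Submodule.IsOrtho.mono_left hBW (Submodule.isOrtho_orthogonal_right W)
  · -- sup = ⊤
    have hAB : A ⊔ B = W := by
      rw [hA', hB, hW, ← Submodule.span_union]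
      congr 1
      ext v
      constructor
      · rintro ((rfl | rfl) | ⟨k, hk1, hk2, rfl⟩)
        · exact ⟨0, by omega, rfl⟩
        · exact ⟨n, le_rfl, rfl⟩
        · exact ⟨k, by omega, rfl⟩
      · rintro ⟨k, hk, rfl⟩
        rcases eq_or_ne k 0 with rfl | h0
        · exact Or.inl (Or.inl rfl)
        · rcases eq_or_ne k n with rfl | hn'
          · exact Or.inl (Or.inr rfl)
          · exact Or.inr ⟨k, by omega, by omega, rfl⟩
    rw [hAB]
    exact Submodule.sup_orthogonal_of_hasOrthogonalProjection
  · -- finrank B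
    rw [hB, ← range_dicke_mid n hn, finrank_span_eq_card (li_dicke_mid n)]
    simp
  · -- GME
    intro ψ hψ hne
    obtain ⟨h1, h2, h3⟩ := span_mid_structure hn (hB ▸ hψ)
    exact ⟨hne, fun S hS hS' hb => hne (mid_gme hn ψ h1 h2 h3 hS hS' hb)⟩
  · -- finrank Wᗮ
    have hw : Module.finrank ℂ W = n + 1 := by
      rw [hW, ← range_dicke_all n, finrank_span_eq_card (li_dicke_all n)]
      simp
    have htot := Submodule.finrank_add_finrank_orthogonal W
    rw [hw, finrank_euclideanSpace, Fintype.card_fun] at htot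
    simp only [Fintype.card_fin] at htot
    have h2n : n + 1 ≤ 2 ^ n := Nat.lt_two_pow_self
    omega
  · -- no nonzero product vectors in Wᗮ
    rintro ψ hψ ⟨φ, hφ⟩
    refine fully_product_zero ψ (fun k hk => ?_) φ hφ
    rw [← inner_dicke_left]
    exact (Submodule.mem_orthogonal W ψ).mp hψ _
      (hW ▸ Submodule.subset_span ⟨k, hk, rfl⟩)
end
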